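/- For every x > 0, G(x) > 0. -/

import Mathlib

open Real

noncomputable def GFJ (α β : ℝ) (x : ℝ) : ℝ :=
  (α + Real.log (1 + x)) ^ (β + 1) * (1 + x) - (β + 1) * x * (α + Real.log (1 + x)) ^ β
    - α ^ (β + 1) * (1 + x)

theorem stmt_4 (α β : ℝ) (hβ : 0 ≤ β) (hαβ : β < α) (x : ℝ) (hx : 0 < x) :
    0 < GFJ α β x := by
  have hα : 0 < α := lt_of_le_of_lt hβ hαβ
  set h : ℝ → ℝ := fun t =>
    (α + t) ^ (β + 1) - α ^ (β + 1) - (β + 1) * (1 - Real.exp (-t)) * (α + t) ^ β with hh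
  have hderiv : ∀ t : ℝ, 0 ≤ t → HasDerivAt h
      ((β + 1) * (α + t) ^ β -
        ((β + 1) * Real.exp (-t) * (α + t) ^ β +
          (β + 1) * (1 - Real.exp (-t)) * (β * (α + t) ^ (β - 1)))) t := by
    intro t ht
    have hu : (0:ℝ) < α + t := by linarith
    have h1 : HasDerivAt (fun t => (α + t) ^ (β + 1)) ((β + 1) * (α + t) ^ β) t := by
      have := ((hasDerivAt_id t).const_add α).rpow_const (p := β + 1) (Or.inl hu.ne')
      simpa using this
    have he : HasDerivAt (fun t : ℝ => 1 - Real.exp (-t)) (Real.exp (-t)) t := by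
      have := (((hasDerivAt_id t).neg).exp).const_sub 1
      simpa using this
    have hg2 : HasDerivAt (fun t => (α + t) ^ β) (β * (α + t) ^ (β - 1)) t := by
      have := ((hasDerivAt_id t).const_add α).rpow_const (p := β) (Or.inl hu.ne')
      simpa using this
    have h2 : HasDerivAt (fun t => (β + 1) * (1 - Real.exp (-t)) * (α + t) ^ β)
        ((β + 1) * Real.exp (-t) * (α + t) ^ β +
          (β + 1) * (1 - Real.exp (-t)) * (β * (α + t) ^ (β - 1))) t := by
      have := (he.const_mul (β + 1)).mul hg2
      exact this
    have := (h1.sub (hasDerivAt_const t (α ^ (β + 1)))).sub h2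
    rw [sub_zero] at this
    exact this
  have hmono : StrictMonoOn h (Set.Ici (0:ℝ)) := by
    apply strictMonoOn_of_deriv_pos (convex_Ici 0)
    · exact fun t ht => ((hderiv t ht).continuousAt).continuousWithinAt
    · intro t ht
      rw [interior_Ici] at ht
      have ht' : (0:ℝ) < t := ht
      rw [(hderiv t ht'.le).deriv]
      have hu : (0:ℝ) < α + t := by linarith
      have he : Real.exp (-t) < 1 := by
        rw [Real.exp_lt_one_iff]; linarith
      have key : (β + 1) * (α + t) ^ β -
          ((β + 1) * Real.exp (-t) * (α + t) ^ β +
            (β + 1) * (1 - Real.exp (-t)) * (β * (α + t) ^ (β - 1)))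
          = (β + 1) * (1 - Real.exp (-t)) * ((α + t - β) * (α + t) ^ (β - 1)) := by
        have hb : (α + t) ^ β = (α + t) ^ (β - 1) * (α + t) := by
          rw [← Real.rpow_add_one hu.ne' (β - 1)]
          congr 1
          ring
        rw [hb]; ring
      rw [key]
      have h3 : 0 < α + t - β := by linarith
      have h4 : 0 < 1 - Real.exp (-t) := by linarith
      positivity
  have h0 : h 0 = 0 := by simp [hh]
  have hL : 0 < Real.log (1 + x) := Real.log_pos (by linarith)
  have hpos : 0 < h (Real.log (1 + x)) := by
    have := hmono (Set.self_mem_Ici) (Set.mem_Ici.mpr hL.le) hL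
    rwa [h0] at this
  have hx1 : (0:ℝ) < 1 + x := by linarith
  have heq : GFJ α β x = (1 + x) * h (Real.log (1 + x)) := by
    have hexp : Real.exp (-(Real.log (1 + x))) = (1 + x)⁻¹ := by
      rw [Real.exp_neg, Real.exp_log hx1]
    simp only [GFJ, hh, hexp]
    field_simp
    ring
  rw [heq]
  exact mul_pos hx1 hpos
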